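/- Strong solvability of interval linear inequalities yields a common solution: Let A_c, Δ ∈ ℝ^{m×n} with Δ ≥ 0 entrywise, b_c ∈ ℝ^m and δ ∈ ℝ^m with δ ≥ 0 entrywise. Suppose that for every real matrix A with |A − A_c| ≤ Δ entrywise and every real vector b with |b − b_c| ≤ δ entrywise, the system A x ≤ b has at least one solution x ∈ ℝ^n. Then there exists a single vector x ∈ ℝ^n such that A x ≤ b holds for every A with |A − A_c| ≤ Δ entrywise and every b with |b − b_c| ≤ δ entrywise. -/

import Mathlib

open scoped RealInnerProductSpace

section cone

variable {ι : Type*} [Fintype ι]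
variable {E : Type*} [NormedAddCommGroup E] [InnerProductSpace ℝ E]
  [FiniteDimensional ℝ E]

omit [FiniteDimensional ℝ E] in
/-- Carathéodory-type reduction for finitely generated cones. -/
theorem cone_carath (v : ι → E) (t : Finset ι) :
    ∀ (c : ι → ℝ), (∀ i, 0 ≤ c i) → (∀ i ∉ t, c i = 0) →
    ∃ (t' : Finset ι) (d : ι → ℝ), (∀ i, 0 ≤ d i) ∧ (∀ i ∉ t', d i = 0) ∧
      (∑ i, d i • v i) = (∑ i, c i • v i) ∧
      LinearIndependent ℝ (fun i : t' => v (i : ι)) := by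
  classical
  induction t using Finset.strongInductionOn with
  | _ t ih =>
    intro c hc hsupp
    by_cases hLI : LinearIndependent ℝ (fun i : t => v (i : ι))
    · exact ⟨t, c, hc, hsupp, rfl, hLI⟩
    have core : ∀ (G : ι → ℝ), (∑ i, G i • v i) = 0 → (∀ i ∉ t, G i = 0) →
        (∃ i, 0 < G i) →
        ∃ (t' : Finset ι) (d : ι → ℝ), (∀ i, 0 ≤ d i) ∧ (∀ i ∉ t', d i = 0) ∧
          (∑ i, d i • v i) = (∑ i, c i • v i) ∧
          LinearIndependent ℝ (fun i : t' => v (i : ι)) := by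
      intro G hGsum hGsupp hGpos
      obtain ⟨iw, hiw⟩ := hGpos
      have hiwt : iw ∈ t := by
        by_contra h
        rw [hGsupp iw h] at hiw
        exact lt_irrefl 0 hiw
      have hP : (t.filter (fun i => 0 < G i)).Nonempty :=
        ⟨iw, Finset.mem_filter.mpr ⟨hiwt, hiw⟩⟩
      obtain ⟨i₀, hi₀P, hi₀min⟩ := Finset.exists_min_image _ (fun i => c i / G i) hP
      obtain ⟨hi₀t, hi₀pos⟩ := Finset.mem_filter.mp hi₀P
      set θ := c i₀ / G i₀ with hθ
      have hθ0 : 0 ≤ θ := div_nonneg (hc i₀) hi₀pos.le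
      set d : ι → ℝ := fun i => c i - θ * G i with hd
      have hd0 : ∀ i, 0 ≤ d i := by
        intro i
        by_cases hit : i ∈ t
        · by_cases hGi : 0 < G i
          · have := hi₀min i (Finset.mem_filter.mpr ⟨hit, hGi⟩)
            have : θ * G i ≤ c i := by
              rw [← le_div_iff₀ hGi]; exact this
            simpa [hd] using sub_nonneg.mpr this
          · have h1 : θ * G i ≤ 0 := mul_nonpos_of_nonneg_of_nonpos hθ0 (not_lt.mp hGi)
            have h2 := hc i
            simp only [hd]
            linarith
        · simp [hd, hsupp i hit, hGsupp i hit]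
      have hdsupp : ∀ i ∉ t.erase i₀, d i = 0 := by
        intro i hi
        by_cases hii : i = i₀
        · subst hii
          simp [hd, hθ, div_mul_cancel₀ _ (ne_of_gt hi₀pos)]
        · have hit : i ∉ t := by
            intro hmem
            exact hi (Finset.mem_erase.mpr ⟨hii, hmem⟩)
          simp [hd, hsupp i hit, hGsupp i hit]
      have hdsum : (∑ i, d i • v i) = ∑ i, c i • v i := by
        simp only [hd, sub_smul, Finset.sum_sub_distrib, mul_smul]
        rw [← Finset.smul_sum, hGsum, smul_zero, sub_zero]
      obtain ⟨t', d', h1, h2, h3, h4⟩ :=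
        ih (t.erase i₀) (Finset.erase_ssubset hi₀t) d hd0 hdsupp
      exact ⟨t', d', h1, h2, h3.trans hdsum, h4⟩
    obtain ⟨g, hg0, i₁, hgi₁⟩ := Fintype.not_linearIndependent_iff.mp hLI
    set G : ι → ℝ := fun i => if h : i ∈ t then g ⟨i, h⟩ else 0 with hG
    have hGsupp : ∀ i ∉ t, G i = 0 := fun i hi => by simp [hG, hi]
    have hGsum : (∑ i, G i • v i) = 0 := by
      rw [← Finset.sum_subset (Finset.subset_univ t)
        (fun i _ hi => by rw [hGsupp i hi, zero_smul])]
      rw [← Finset.sum_attach t (fun i => G i • v i)]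
      rw [← hg0]
      exact Finset.sum_congr rfl fun i _ => by simp [hG, i.2]
    have hGi₁ : G (i₁ : ι) = g i₁ := by simp [hG, i₁.2]
    rcases lt_or_gt_of_ne hgi₁ with h | h
    · refine core (fun i => -G i) ?_ (fun i hi => by simp [hGsupp i hi]) ?_
      · simp only [neg_smul, Finset.sum_neg_distrib, hGsum, neg_zero]
      · exact ⟨i₁, by simp only [hGi₁]; linarith⟩
    · exact core G hGsum hGsupp ⟨i₁, by rw [hGi₁]; exact h⟩


theorem cone_isClosed (v : ι → E) :
    IsClosed {x : E | ∃ c : ι → ℝ, (∀ i, 0 ≤ c i) ∧ ∑ i, c i • v i = x} := by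
  classical
  have key : {x : E | ∃ c : ι → ℝ, (∀ i, 0 ≤ c i) ∧ ∑ i, c i • v i = x} =
      ⋃ t : Finset ι,
        (if LinearIndependent ℝ (fun i : t => v (i : ι)) then
          (fun c : ↥t → ℝ => ∑ i, c i • v (i : ι)) '' {c | ∀ i, 0 ≤ c i}
        else ∅) := by
    ext x
    simp only [Set.mem_setOf_eq, Set.mem_iUnion]
    constructor
    · rintro ⟨c, hc, hsum⟩
      obtain ⟨t', d, hd0, hdsupp, hdsum, hLI⟩ :=
        cone_carath v Finset.univ c hc (fun i hi => absurd (Finset.mem_univ i) hi)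
      refine ⟨t', ?_⟩
      rw [if_pos hLI]
      refine ⟨fun i => d (i : ι), fun i => hd0 (i : ι), ?_⟩
      show (∑ i : ↥t', d (i : ι) • v (i : ι)) = x
      have e1 : (∑ i : ↥t', d (i : ι) • v (i : ι)) = ∑ i ∈ t', d i • v i :=
        Finset.sum_attach t' (fun i => d i • v i)
      have e2 : (∑ i ∈ t', d i • v i) = ∑ i, d i • v i :=
        Finset.sum_subset (Finset.subset_univ t')
          (fun i _ hi => by rw [hdsupp i hi, zero_smul])
      rw [e1, e2, hdsum, hsum]
    · rintro ⟨t, hx⟩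
      by_cases hLI : LinearIndependent ℝ (fun i : t => v (i : ι))
      · rw [if_pos hLI] at hx
        obtain ⟨c, hc, hsum⟩ := hx
        refine ⟨fun i => if h : i ∈ t then c ⟨i, h⟩ else 0, ?_, ?_⟩
        · intro i
          by_cases h : i ∈ t
          · simpa [h] using hc ⟨i, h⟩
          · simp [h]
        · rw [← hsum]
          rw [← Finset.sum_subset (Finset.subset_univ t)
            (fun i _ hi => by simp [hi])]
          rw [← Finset.sum_attach t
            (fun i => (if h : i ∈ t then c ⟨i, h⟩ else 0) • v i)]
          exact Finset.sum_congr rfl fun i _ => by simp [i.2]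
      · rw [if_neg hLI] at hx
        exact absurd hx (Set.notMem_empty x)
  rw [key]
  refine isClosed_iUnion_of_finite fun t => ?_
  by_cases hLI : LinearIndependent ℝ (fun i : t => v (i : ι))
  · rw [if_pos hLI]
    set φ : (↥t → ℝ) →ₗ[ℝ] E :=
      { toFun := fun c => ∑ i, c i • v (i : ι)
        map_add' := fun c c' => by
          simp [add_smul, Finset.sum_add_distrib]
        map_smul' := fun r c => by
          simp [mul_smul, Finset.smul_sum] } with hφ
    have hker : LinearMap.ker φ = ⊥ := by
      rw [LinearMap.ker_eq_bot']
      intro c hc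
      exact funext (Fintype.linearIndependent_iff.mp hLI c hc)
    have hemb := LinearMap.isClosedEmbedding_of_injective hker
    have hclosed : IsClosed {c : ↥t → ℝ | ∀ i, 0 ≤ c i} := by
      have : {c : ↥t → ℝ | ∀ i, 0 ≤ c i} = ⋂ i, {c | 0 ≤ c i} := by
        ext c; simp [Set.mem_iInter]
      rw [this]
      exact isClosed_iInter fun i => isClosed_le continuous_const (continuous_apply i)
    exact hemb.isClosedMap _ hclosed
  · rw [if_neg hLI]; exact isClosed_empty

theorem cone_farkas [CompleteSpace E] (v : ι → E) (b : E)
    (hb : ¬ ∃ c : ι → ℝ, (∀ i, 0 ≤ c i) ∧ ∑ i, c i • v i = b) :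
    ∃ y : E, (∀ i, 0 ≤ ⟪v i, y⟫) ∧ ⟪y, b⟫ < 0 := by
  classical
  set K : ConvexCone ℝ E :=
    { carrier := {x : E | ∃ c : ι → ℝ, (∀ i, 0 ≤ c i) ∧ ∑ i, c i • v i = x}
      smul_mem' := by
        rintro r hr x ⟨c, hc, rfl⟩
        exact ⟨fun i => r * c i, fun i => mul_nonneg hr.le (hc i),
          by simp [mul_smul, Finset.smul_sum]⟩
      add_mem' := by
        rintro x ⟨c, hc, rfl⟩ y ⟨c', hc', rfl⟩
        exact ⟨fun i => c i + c' i, fun i => add_nonneg (hc i) (hc' i),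
          by simp [add_smul, Finset.sum_add_distrib]⟩ } with hK
  have hne : (K : Set E).Nonempty := ⟨0, 0, fun _ => le_refl 0, by simp⟩
  have hcl : IsClosed (K : Set E) := cone_isClosed v
  obtain ⟨y, hy1, hy2⟩ : ∃ y : E, (∀ x ∈ (K : Set E), 0 ≤ ⟪x, y⟫) ∧ ⟪y, b⟫ < 0 := by
    let C : ProperCone ℝ E := ⟨K.toPointedCone ⟨0, fun _ => le_refl 0, by simp⟩, hcl⟩
    obtain ⟨y, h1, h2⟩ := C.hyperplane_separation' (x₀ := b) hb
    exact ⟨y, h1, by rwa [real_inner_comm]⟩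
  refine ⟨y, fun i => ?_, hy2⟩
  refine hy1 (v i) ⟨fun j => if j = i then 1 else 0, ?_, ?_⟩
  · intro j; dsimp only; split <;> norm_num
  · simp [ite_smul]


end cone

theorem pilp_sum_apply {m : ℕ} {κ : Type*} (s : Finset κ)
    (w : κ → EuclideanSpace ℝ (Fin m)) (i : Fin m) :
    (∑ k ∈ s, w k) i = ∑ k ∈ s, w k i := by
  classical
  induction s using Finset.cons_induction with
  | empty => rfl
  | cons a s ha ih => rw [Finset.sum_cons, Finset.sum_cons, PiLp.add_apply, ih]

theorem euc_inner_eq {m : ℕ} (u w : EuclideanSpace ℝ (Fin m)) :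
    ⟪u, w⟫ = ∑ i, u i * w i := by
  simp [PiLp.inner_apply, RCLike.inner_apply, conj_trivial]
  exact Finset.sum_congr rfl fun i _ => mul_comm _ _

theorem ineq_aux (a ac dd x1 x2 : ℝ) (h : |a - ac| ≤ dd) (h1 : 0 ≤ x1) (h2 : 0 ≤ x2) :
    a * (x1 - x2) ≤ x1 * (ac + dd) + x2 * (dd - ac) := by
  rcases abs_le.mp h with ⟨hl, hr⟩
  nlinarith [mul_nonneg h1 (by linarith : (0:ℝ) ≤ dd - (a - ac)),
    mul_nonneg h2 (by linarith : (0:ℝ) ≤ dd + (a - ac))]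




/-- Strong solvability of interval linear inequalities yields a common solution:
if every system `A x ≤ b` with `A` in `[A_c - Δ, A_c + Δ]` and `b` in
`[b_c - δ, b_c + δ]` has a solution, then there is a single `x` solving all of
them simultaneously. -/
theorem strong_solvability_common_solution {m n : ℕ}
    (Ac Δ : Matrix (Fin m) (Fin n) ℝ) (bc δ : Fin m → ℝ)
    (hΔ : ∀ i j, 0 ≤ Δ i j) (hδ : ∀ i, 0 ≤ δ i)
    (hStrong : ∀ (A : Matrix (Fin m) (Fin n) ℝ) (b : Fin m → ℝ),
      (∀ i j, |A i j - Ac i j| ≤ Δ i j) → (∀ i, |b i - bc i| ≤ δ i) →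
      ∃ x : Fin n → ℝ, ∀ i, A.mulVec x i ≤ b i) :
    ∃ x : Fin n → ℝ, ∀ (A : Matrix (Fin m) (Fin n) ℝ) (b : Fin m → ℝ),
      (∀ i j, |A i j - Ac i j| ≤ Δ i j) → (∀ i, |b i - bc i| ≤ δ i) →
      ∀ i, A.mulVec x i ≤ b i := by
  classical
  set v : ((Fin n ⊕ Fin n) ⊕ Fin m) → EuclideanSpace ℝ (Fin m) :=
    Sum.elim (Sum.elim
      (fun j => (WithLp.toLp 2 fun i => Ac i j + Δ i j : EuclideanSpace ℝ (Fin m)))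
      (fun j => (WithLp.toLp 2 fun i => Δ i j - Ac i j : EuclideanSpace ℝ (Fin m))))
      (fun i₀ => (WithLp.toLp 2 fun i => if i = i₀ then (1:ℝ) else 0 : EuclideanSpace ℝ (Fin m))) with hv
  set b' : EuclideanSpace ℝ (Fin m) :=
    (WithLp.toLp 2 fun i => bc i - δ i : EuclideanSpace ℝ (Fin m)) with hb'
  by_cases hmem : ∃ c : ((Fin n ⊕ Fin n) ⊕ Fin m) → ℝ,
      (∀ k, 0 ≤ c k) ∧ ∑ k, c k • v k = b'
  · obtain ⟨c, hc, hsum⟩ := hmem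
    have hcoord : ∀ i, ∑ k, c k * v k i = bc i - δ i := by
      intro i
      have h0 : (∑ k, c k • v k) i = b' i := by rw [hsum]
      rw [pilp_sum_apply] at h0
      simpa [PiLp.smul_apply, smul_eq_mul, hb'] using h0
    have hkey : ∀ i,
        (∑ j, c (.inl (.inl j)) * (Ac i j + Δ i j)) +
          ∑ j, c (.inl (.inr j)) * (Δ i j - Ac i j) ≤ bc i - δ i := by
      intro i
      have h1 := hcoord i
      rw [Fintype.sum_sum_type, Fintype.sum_sum_type] at h1
      simp only [hv, Sum.elim_inl, Sum.elim_inr] at h1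
      rw [show (∑ i₀, c (Sum.inr i₀) * (if i = i₀ then (1:ℝ) else 0)) = c (.inr i) from by
        simp [mul_ite, Finset.sum_ite_eq]] at h1
      have := hc (.inr i)
      linarith
    refine ⟨fun j => c (.inl (.inl j)) - c (.inl (.inr j)), fun A b hA hb i => ?_⟩
    have hterm : ∀ j, A i j * (c (.inl (.inl j)) - c (.inl (.inr j))) ≤
        c (.inl (.inl j)) * (Ac i j + Δ i j) + c (.inl (.inr j)) * (Δ i j - Ac i j) :=
      fun j => ineq_aux _ _ _ _ _ (hA i j) (hc _) (hc _)
    have hmv : A.mulVec (fun j => c (.inl (.inl j)) - c (.inl (.inr j))) i =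
        ∑ j, A i j * (c (.inl (.inl j)) - c (.inl (.inr j))) := by
      simp [Matrix.mulVec, dotProduct]
    rw [hmv]
    have hb2 : bc i - δ i ≤ b i := by
      have := abs_le.mp (hb i); linarith [this.1]
    calc ∑ j, A i j * (c (.inl (.inl j)) - c (.inl (.inr j)))
        ≤ ∑ j, (c (.inl (.inl j)) * (Ac i j + Δ i j) +
            c (.inl (.inr j)) * (Δ i j - Ac i j)) := Finset.sum_le_sum fun j _ => hterm j
      _ = (∑ j, c (.inl (.inl j)) * (Ac i j + Δ i j)) +
            ∑ j, c (.inl (.inr j)) * (Δ i j - Ac i j) := Finset.sum_add_distrib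
      _ ≤ bc i - δ i := hkey i
      _ ≤ b i := hb2
  · exfalso
    obtain ⟨y, hy1, hy2⟩ := cone_farkas v b' hmem
    have hy : ∀ i, 0 ≤ y i := by
      intro i
      have := hy1 (.inr i)
      rw [euc_inner_eq] at this
      simpa [hv, ite_mul, Finset.sum_ite_eq'] using this
    set q : Fin n → ℝ := fun j => ∑ i, Ac i j * y i with hq
    set p : Fin n → ℝ := fun j => ∑ i, Δ i j * y i with hp
    have hqp1 : ∀ j, 0 ≤ q j + p j := by
      intro j
      have := hy1 (.inl (.inl j))
      rw [euc_inner_eq] at this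
      simpa [hv, hq, hp, add_mul, Finset.sum_add_distrib] using this
    have hqp2 : ∀ j, 0 ≤ p j - q j := by
      intro j
      have := hy1 (.inl (.inr j))
      rw [euc_inner_eq] at this
      simpa [hv, hq, hp, sub_mul, Finset.sum_sub_distrib] using this
    have hp0 : ∀ j, 0 ≤ p j := fun j => by linarith [hqp1 j, hqp2 j]
    set t : Fin n → ℝ := fun j => if p j = 0 then 0 else -q j / p j with ht
    have ht1 : ∀ j, |t j| ≤ 1 := by
      intro j
      by_cases h : p j = 0
      · simp [ht, h]
      · have hpj : 0 < p j := lt_of_le_of_ne (hp0 j) (Ne.symm h)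
        rw [ht]
        simp only [if_neg h]
        rw [abs_div, abs_neg, div_le_one (by rwa [abs_of_pos hpj])]
        rw [abs_of_pos hpj]
        rw [abs_le]
        constructor <;> linarith [hqp1 j, hqp2 j]
    set A : Matrix (Fin m) (Fin n) ℝ := Matrix.of fun i j => Ac i j + t j * Δ i j with hA
    have hAint : ∀ i j, |A i j - Ac i j| ≤ Δ i j := by
      intro i j
      rw [hA]
      simp only [Matrix.of_apply, add_sub_cancel_left]
      rw [abs_mul, abs_of_nonneg (hΔ i j)]
      calc |t j| * Δ i j ≤ 1 * Δ i j := by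
            exact mul_le_mul_of_nonneg_right (ht1 j) (hΔ i j)
        _ = Δ i j := one_mul _
    have hbint : ∀ i, |(fun i => bc i - δ i) i - bc i| ≤ δ i := by
      intro i; simp [abs_of_nonneg (hδ i)]
    obtain ⟨x, hx⟩ := hStrong A (fun i => bc i - δ i) hAint hbint
    have hcol : ∀ j, (∑ i, A i j * y i) = 0 := by
      intro j
      rw [hA]
      simp only [Matrix.of_apply, add_mul, Finset.sum_add_distrib, mul_assoc,
        ← Finset.mul_sum]
      by_cases h : p j = 0
      · have hq0 : q j = 0 := by
          have := hqp1 j; have := hqp2 j; rw [h] at *; linarith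
        show q j + t j * p j = 0
        rw [hq0, h, mul_zero, add_zero]
      · show q j + t j * p j = 0
        rw [ht]
        simp only [if_neg h]
        field_simp
        ring
    have hS : (∑ i, y i * A.mulVec x i) = 0 := by
      have e1 : ∀ i, y i * A.mulVec x i = ∑ j, A i j * y i * x j := by
        intro i
        rw [Matrix.mulVec, dotProduct, Finset.mul_sum]
        exact Finset.sum_congr rfl fun j _ => by ring
      rw [Finset.sum_congr rfl fun i _ => e1 i, Finset.sum_comm]
      rw [Finset.sum_congr rfl fun j (_ : j ∈ Finset.univ) => (Finset.sum_mul ..).symm]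
      simp only [hcol, zero_mul, Finset.sum_const_zero]
    have hSle : (∑ i, y i * A.mulVec x i) ≤ ∑ i, y i * (bc i - δ i) :=
      Finset.sum_le_sum fun i _ => mul_le_mul_of_nonneg_left (hx i) (hy i)
    have hyb : (∑ i, y i * (bc i - δ i)) < 0 := by
      rw [euc_inner_eq] at hy2
      calc (∑ i, y i * (bc i - δ i)) = ∑ i, y i * b' i :=
            Finset.sum_congr rfl fun i _ => by rw [hb']
        _ < 0 := hy2
    linarith
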